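/- Let 1 ≤ k < min{n_i : i ∈ {1, …, m}}. If the generalized affine Cartesian code C_k(𝒜, v_1 × ⋯ × v_m) is LCD, then C_k(A_i, v_i) is LCD for every i ∈ {1, …, m}. -/
import Mathlib


open MvPolynomial

/-- The points of the Cartesian set `𝒜 = A 0 × ⋯ × A (m-1)`. -/
abbrev CartPts {K : Type*} {m : ℕ} (A : Fin m → Finset K) :=
  { x : Fin m → K // ∀ i, x i ∈ A i }

/-- The space `S_{<k}` of multivariate polynomials of total degree less than `k`. -/
def degLT (K : Type*) [Field K] (m k : ℕ) : Submodule K (MvPolynomial (Fin m) K) where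
  carrier := {f | ∀ d ∈ f.support, (d.sum fun _ e => e) < k}
  zero_mem' := by simp
  add_mem' := fun {f g} hf hg d hd => by
    rcases Finset.mem_union.mp (MvPolynomial.support_add hd) with h | h
    exacts [hf d h, hg d h]
  smul_mem' := fun c f hf d hd => hf d (MvPolynomial.support_smul hd)

/-- The evaluation map `ev : f ↦ (v_a · f(a))_{a ∈ 𝒜}`. -/
noncomputable def evalLM {K : Type*} [Field K] {m : ℕ} (A : Fin m → Finset K)
    (v : CartPts A → K) : MvPolynomial (Fin m) K →ₗ[K] (CartPts A → K) :=
  LinearMap.pi fun a => v a • (MvPolynomial.aeval (a.1 : Fin m → K)).toLinearMap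

/-- The generalized affine Cartesian code `C_k(𝒜, v)`, the image of `S_{<k}` under `ev_k`. -/
noncomputable def cartCode {K : Type*} [Field K] {m : ℕ} (k : ℕ) (A : Fin m → Finset K)
    (v : CartPts A → K) : Submodule K (CartPts A → K) :=
  Submodule.map (evalLM A v) (degLT K m k)

/-- The dual code `C^⊥` with respect to the standard dot product. -/
def dualCode {K : Type*} [Field K] {ι : Type*} [Fintype ι] (C : Submodule K (ι → K)) :
    Submodule K (ι → K) where
  carrier := {w | ∀ c ∈ C, ∑ i, w i * c i = 0}
  zero_mem' := by simp
  add_mem' := fun {w w'} hw hw' c hc => by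
    simp only [Pi.add_apply, add_mul, Finset.sum_add_distrib, hw c hc, hw' c hc, add_zero]
  smul_mem' := fun r w hw c hc => by
    simp only [Pi.smul_apply, smul_eq_mul, mul_assoc, ← Finset.mul_sum, hw c hc, mul_zero]

/-- A linear code is LCD if it meets its dual trivially. -/
def IsLCD {K : Type*} [Field K] {ι : Type*} [Fintype ι] (C : Submodule K (ι → K)) : Prop :=
  C ⊓ dualCode C = ⊥

/-- The one-variable generalized Reed–Solomon code on a set `B ⊆ K` with weights `w`. -/
noncomputable def grsCode {K : Type*} [Field K] (B : Finset K) (k : ℕ) (w : {x // x ∈ B} → K) :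
    Submodule K ({x // x ∈ B} → K) :=
  Submodule.map (LinearMap.pi fun b => w b • (Polynomial.aeval (b : K)).toLinearMap)
    (Polynomial.degreeLT K k)

/-- `CartPts A` is equivalent to the pi type of the subtypes. -/
def cartEquiv {K : Type*} {m : ℕ} (A : Fin m → Finset K) :
    CartPts A ≃ ∀ j, {x // x ∈ A j} where
  toFun a := fun j => ⟨a.1 j, a.2 j⟩
  invFun p := ⟨fun j => (p j).1, fun j => (p j).2⟩
  left_inv a := rfl
  right_inv p := rfl

/-- If `k < min{n_i}` and `C_k(𝒜, v_1 × ⋯ × v_m)` is LCD, then every component code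
`C_k(A_i, v_i)` is LCD. -/
theorem components_isLCD_of_cartCode {K : Type*} [Field K] [Fintype K] [DecidableEq K]
    {m : ℕ} (hm : 1 ≤ m) (A : Fin m → Finset K) (hA : ∀ i, (A i).Nonempty)
    (w : ∀ i, {x // x ∈ A i} → K) (hw : ∀ i b, w i b ≠ 0)
    (k : ℕ) (hk : 1 ≤ k) (hkm : ∀ i, k < (A i).card)
    (h : IsLCD (cartCode k A (fun a => ∏ i, w i ⟨a.1 i, a.2 i⟩))) :
    ∀ i, IsLCD (grsCode (A i) k (w i)) := by
  intro i
  set v : CartPts A → K := (fun a => ∏ j, w j ⟨a.1 j, a.2 j⟩) with hv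
  rw [IsLCD, Submodule.eq_bot_iff]
  rintro c ⟨hc1, hc2⟩
  by_contra hc0
  obtain ⟨f, hf, hfc⟩ := hc1
  have hfdeg : f.degree < (k : ℕ) := Polynomial.mem_degreeLT.mp hf
  have hcb : ∀ b : {x // x ∈ A i}, c b = w i b * Polynomial.aeval (b : K) f := by
    intro b; rw [← hfc]; rfl
  set P : MvPolynomial (Fin m) K := Polynomial.aeval (X i : MvPolynomial (Fin m) K) f
    with hPdef
  have hPev : ∀ x : Fin m → K, MvPolynomial.aeval x P = Polynomial.aeval (x i) f := by
    intro x
    rw [hPdef, ← Polynomial.aeval_algHom_apply, MvPolynomial.aeval_X]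
  have hPdeg : P ∈ degLT K m k := by
    intro d hd
    refine lt_of_le_of_lt (MvPolynomial.le_totalDegree hd) ?_
    have hsum : P = ∑ j ∈ f.support, MvPolynomial.C (f.coeff j) * (X i : MvPolynomial (Fin m) K) ^ j := by
      rw [hPdef, Polynomial.aeval_def, Polynomial.eval₂_eq_sum, Polynomial.sum_def]
      rfl
    rw [hsum]
    refine lt_of_le_of_lt (MvPolynomial.totalDegree_finset_sum _ _) ?_
    rw [Finset.sup_lt_iff (show (⊥ : ℕ) < k from hk)]
    intro j hj
    have hjk : j < k := by
      have h1 : (j : WithBot ℕ) ≤ f.degree :=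
        Polynomial.le_degree_of_ne_zero (Polynomial.mem_support_iff.mp hj)
      exact_mod_cast lt_of_le_of_lt h1 hfdeg
    calc (MvPolynomial.C (f.coeff j) * (X i : MvPolynomial (Fin m) K) ^ j).totalDegree
        ≤ (MvPolynomial.C (f.coeff j) : MvPolynomial (Fin m) K).totalDegree
            + ((X i : MvPolynomial (Fin m) K) ^ j).totalDegree :=
          MvPolynomial.totalDegree_mul _ _
      _ = j := by rw [MvPolynomial.totalDegree_C, MvPolynomial.totalDegree_X_pow, zero_add]
      _ < k := hjk
  have hev : ∀ (Q : MvPolynomial (Fin m) K) (a : CartPts A),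
      evalLM A v Q a = v a * MvPolynomial.aeval (a.1 : Fin m → K) Q := fun Q a => rfl
  set F : CartPts A → K := evalLM A v P with hF
  have hF1 : F ∈ cartCode k A v := ⟨P, hPdeg, rfl⟩
  -- the key computation
  have key : ∀ Q ∈ degLT K m k,
      ∑ a : CartPts A, F a * evalLM A v Q a = 0 := by
    intro Q hQ
    have expand : ∀ a : CartPts A, MvPolynomial.aeval (a.1 : Fin m → K) Q
        = ∑ d ∈ Q.support, Q.coeff d * ∏ j, (a.1 j) ^ (d j) := by
      intro a
      conv_lhs => rw [Q.as_sum]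
      rw [map_sum]
      refine Finset.sum_congr rfl fun d _ => ?_
      rw [MvPolynomial.aeval_monomial, Finsupp.prod_pow]
      simp [Algebra.algebraMap_self_apply]
    calc ∑ a : CartPts A, F a * evalLM A v Q a
        = ∑ a : CartPts A, ∑ d ∈ Q.support,
            (v a * Polynomial.aeval (a.1 i) f) * (Q.coeff d * (v a * ∏ j, (a.1 j) ^ (d j))) := by
          refine Finset.sum_congr rfl fun a _ => ?_
          simp only [hF, hev, hPev, expand, Finset.mul_sum]
          refine Finset.sum_congr rfl fun d _ => ?_
          ring
      _ = ∑ d ∈ Q.support, ∑ a : CartPts A,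
            (v a * Polynomial.aeval (a.1 i) f) * (Q.coeff d * (v a * ∏ j, (a.1 j) ^ (d j))) :=
          Finset.sum_comm
      _ = 0 := by
          refine Finset.sum_eq_zero fun d hd => ?_
          have hdk : (d.sum fun _ e => e) < k := hQ d hd
          have hdi : d i < k := by
            refine lt_of_le_of_lt ?_ hdk
            rcases eq_or_ne (d i) 0 with h0 | h0
            · simp [h0]
            · rw [Finsupp.sum]
              exact Finset.single_le_sum (fun _ _ => Nat.zero_le _)
                (Finsupp.mem_support_iff.mpr h0)
          -- the factored form
          set g : ∀ j : Fin m, {x // x ∈ A j} → K :=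
            fun j b => (w j b * w j b * (b : K) ^ (d j))
              * (if j = i then Polynomial.aeval (b : K) f else 1) with hg
          have claim1 : ∀ a : CartPts A,
              (v a * Polynomial.aeval (a.1 i) f) * (Q.coeff d * (v a * ∏ j, (a.1 j) ^ (d j)))
              = Q.coeff d * ∏ j, g j ⟨a.1 j, a.2 j⟩ := by
            intro a
            have : ∏ j, g j ⟨a.1 j, a.2 j⟩
                = ((∏ j, w j ⟨a.1 j, a.2 j⟩) * (∏ j, w j ⟨a.1 j, a.2 j⟩)
                    * ∏ j, (a.1 j) ^ (d j)) * Polynomial.aeval (a.1 i) f := by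
              simp only [hg, Finset.prod_mul_distrib, Finset.prod_ite_eq', Finset.mem_univ,
                if_true]
            rw [this, hv]
            ring
          calc ∑ a : CartPts A,
                (v a * Polynomial.aeval (a.1 i) f) * (Q.coeff d * (v a * ∏ j, (a.1 j) ^ (d j)))
              = ∑ a : CartPts A, Q.coeff d * ∏ j, g j ⟨a.1 j, a.2 j⟩ :=
                Finset.sum_congr rfl fun a _ => claim1 a
            _ = Q.coeff d * ∑ p : ∀ j, {x // x ∈ A j}, ∏ j, g j (p j) := by
                rw [← Finset.mul_sum]
                congr 1
                exact Fintype.sum_equiv (cartEquiv A) _ _ (fun a => rfl)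
            _ = Q.coeff d * ∏ j, ∑ b : {x // x ∈ A j}, g j b := by
                rw [← Fintype.prod_sum]
            _ = 0 := by
                have hzero : ∑ b : {x // x ∈ A i}, g i b = 0 := by
                  set c' : {x // x ∈ A i} → K :=
                    (LinearMap.pi fun b : {x // x ∈ A i} =>
                      w i b • ((Polynomial.aeval (b : K)).toLinearMap : Polynomial K →ₗ[K] K))
                      ((Polynomial.X : Polynomial K) ^ (d i)) with hc'
                  have hc'mem : c' ∈ grsCode (A i) k (w i) := by
                    refine ⟨(Polynomial.X : Polynomial K) ^ (d i), ?_, rfl⟩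
                    rw [SetLike.mem_coe, Polynomial.mem_degreeLT, Polynomial.degree_X_pow]
                    exact_mod_cast hdi
                  have hc'app : ∀ b : {x // x ∈ A i}, c' b = w i b * (b : K) ^ (d i) := by
                    intro b
                    simp [hc', LinearMap.pi_apply]
                  have := hc2 c' hc'mem
                  rw [← this]
                  refine Finset.sum_congr rfl fun b _ => ?_
                  simp only [hg, hc'app, hcb, if_pos]
                  ring
                rw [Finset.prod_eq_zero (Finset.mem_univ i) hzero, mul_zero]
  have hF2 : F ∈ dualCode (cartCode k A v) := by
    rintro c' ⟨Q, hQ, rfl⟩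
    exact key Q hQ
  have hF0 : F = 0 := by
    have hmem : F ∈ cartCode k A v ⊓ dualCode (cartCode k A v) :=
      Submodule.mem_inf.mpr ⟨hF1, hF2⟩
    rw [IsLCD] at h
    rw [h] at hmem
    exact hmem
  -- derive a contradiction
  obtain ⟨b0, hb0⟩ := Function.ne_iff.mp hc0
  have hb0' : c b0 ≠ 0 := hb0
  have hfb0 : Polynomial.aeval (b0 : K) f ≠ 0 := by
    intro h0
    apply hb0'
    rw [hcb, h0, mul_zero]
  set x : Fin m → K := fun j => if j = i then (b0 : K) else (hA j).choose with hx
  have hxmem : ∀ j, x j ∈ A j := by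
    intro j
    rw [hx]
    dsimp only
    split_ifs with hji
    · subst hji; exact b0.2
    · exact (hA j).choose_spec
  set a0 : CartPts A := ⟨x, hxmem⟩ with ha0
  have hva0 : v a0 ≠ 0 := by
    rw [hv]
    exact Finset.prod_ne_zero_iff.mpr fun j _ => hw j _
  have hxi : x i = (b0 : K) := by rw [hx]; simp
  have : F a0 = v a0 * Polynomial.aeval (b0 : K) f := by
    rw [hF, hev, hPev, ha0]
    dsimp only
    rw [hxi]
  have hFa0 : F a0 ≠ 0 := by
    rw [this]
    exact mul_ne_zero hva0 hfb0
  exact hFa0 (by rw [hF0]; rfl)
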